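/- Let k be a positive even integer, let G be a connected weighted graph with nonnegative edge weights whose girth is at least k, and let D be a DFS tree of G. Then mac(G) ≥ w(G)/2 + ((k−1)/(2k))·w(D). -/

import Mathlib

namespace MaxCut

/-- Weight of the cut induced by vertex set `A`: total weight of edges of `G`
with exactly one endpoint in `A`. -/
noncomputable def cutWeight {V : Type*} (G : SimpleGraph V) (w : Sym2 V → ℝ) (A : Set V) : ℝ :=
  ∑ᶠ e ∈ {e ∈ G.edgeSet | ∃ x y, e = s(x, y) ∧ x ∈ A ∧ y ∉ A}, w e

/-- Total weight of the edges of `G`. -/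
noncomputable def totalWeight {V : Type*} (G : SimpleGraph V) (w : Sym2 V → ℝ) : ℝ :=
  ∑ᶠ e ∈ G.edgeSet, w e

/-- Total weight of a set of edges. -/
noncomputable def setWeight {V : Type*} (w : Sym2 V → ℝ) (M : Set (Sym2 V)) : ℝ :=
  ∑ᶠ e ∈ M, w e

/-- `T` is a spanning tree of `G`. -/
def IsSpanningTree {V : Type*} (G T : SimpleGraph V) : Prop := T ≤ G ∧ T.IsTree

/-- `T` is a DFS tree of `G` rooted at `r`: a spanning tree such that every edge of `G`
joins an ancestor–descendant pair (here `x` is an ancestor of `y` in the tree `T` rooted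
at `r` iff `x` lies on the unique `r`–`y` path, equivalently
`T.dist r x + T.dist x y = T.dist r y`). -/
def IsDFSTree {V : Type*} (G T : SimpleGraph V) (r : V) : Prop :=
  T ≤ G ∧ T.IsTree ∧ ∀ x y, G.Adj x y →
    T.dist r x + T.dist x y = T.dist r y ∨ T.dist r y + T.dist y x = T.dist r x

/-- `M` is a matching of `G` (a set of pairwise non-adjacent edges of `G`). -/
def IsMatching {V : Type*} (G : SimpleGraph V) (M : Set (Sym2 V)) : Prop :=
  M ⊆ G.edgeSet ∧ ∀ e ∈ M, ∀ f ∈ M, e ≠ f → ∀ v, ¬(v ∈ e ∧ v ∈ f)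

/-- Every vertex of `G` has degree at most `d`. -/
def MaxDegreeLE {V : Type*} (G : SimpleGraph V) (d : ℕ) : Prop :=
  ∀ v : V, {u | G.Adj v u}.ncard ≤ d

lemma bool_xor_ne₁ : ∀ a b u : Bool, a ≠ b → xor a u ≠ xor b u := by decide

lemma bool_xor_ne₂ : ∀ a b u v : Bool, ((xor a u ≠ xor b v) ↔ xor u v = !(xor a b)) := by decide

lemma card_xor_eq {B : ℕ} (i j : Fin B) (hij : i ≠ j) (c : Bool) :
    2 * (Finset.univ.filter (fun g : Fin B → Bool => xor (g i) (g j) = c)).card = 2 ^ B := by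
  classical
  have hupd : ∀ g : Fin B → Bool, ∀ x : Bool, Function.update g i x j = g j :=
    fun g x => Function.update_of_ne (Ne.symm hij) _ _
  have key : (Finset.univ.filter (fun g : Fin B → Bool => xor (g i) (g j) = c)).card
      = (Finset.univ.filter (fun g : Fin B → Bool => ¬(xor (g i) (g j) = c))).card := by
    refine Finset.card_bij' (fun g _ => Function.update g i (!g i))
      (fun g _ => Function.update g i (!g i)) ?_ ?_ ?_ ?_
    · intro g hg
      simp only [Finset.mem_filter, Finset.mem_univ, true_and] at hg ⊢
      rw [Function.update_self, hupd]
      revert hg; cases g i <;> cases g j <;> cases c <;> simp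
    · intro g hg
      simp only [Finset.mem_filter, Finset.mem_univ, true_and] at hg ⊢
      rw [Function.update_self, hupd]
      revert hg; cases g i <;> cases g j <;> cases c <;> simp
    · intro g _
      simp [Function.update_idem, Function.update_self, Bool.not_not, Function.update_eq_self]
    · intro g _
      simp [Function.update_idem, Function.update_self, Bool.not_not, Function.update_eq_self]
  have h2 := Finset.card_filter_add_card_filter_not
    (s := (Finset.univ : Finset (Fin B → Bool))) (p := fun g => xor (g i) (g j) = c)
  have h3 : (Finset.univ : Finset (Fin B → Bool)).card = 2 ^ B := by
    simp [Finset.card_univ, Fintype.card_fun]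
  rw [h3] at h2
  rw [two_mul]
  nth_rewrite 2 [key]
  exact h2

lemma aux_parity_ne {a b d : ℕ} (h : a + d = b) (hd : d % 2 = 1) : a % 2 ≠ b % 2 := by omega

lemma aux_odd_case {k d : ℕ} (hk : 0 < k) (hke : Even k) (hd1 : 0 < d)
    (hcase : d = 1 ∨ k - 1 ≤ d) (hlt : d < k) : d % 2 = 1 := by
  obtain ⟨j, hj⟩ := hke; omega

lemma aux_succ_parity (a : ℕ) : a % 2 ≠ (a + 1) % 2 := by omega

lemma aux_add3 {a t d k : ℕ} (h : k ≤ d) : a + t + k ≤ a + d + t := by omega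

lemma aux_dvd_unique {k a t t' : ℕ} (ht : t < k) (ht' : t' < k)
    (h1 : k ∣ a + t) (h2 : k ∣ a + t') : t = t' := by
  rcases le_total t t' with h | h
  · have hd := Nat.dvd_sub h2 h1
    rw [show a + t' - (a + t) = t' - t by omega] at hd
    rcases Nat.eq_zero_or_pos (t' - t) with h0 | h0
    · omega
    · have := Nat.le_of_dvd h0 hd; omega
  · have hd := Nat.dvd_sub h1 h2
    rw [show a + t - (a + t') = t - t' by omega] at hd
    rcases Nat.eq_zero_or_pos (t - t') with h0 | h0
    · omega
    · have := Nat.le_of_dvd h0 hd; omega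

lemma aux_arith {k m c X : ℕ} (hk : 0 < k) (hm : k = m + 1) (hc : c ≤ 1) (hck : c ≤ k) :
    (k + m) * X ≤ (k - c) * (2 * X) + c * X := by
  subst hm
  interval_cases c
  · simp only [Nat.sub_zero, Nat.zero_mul, Nat.add_zero]
    nlinarith
  · rw [Nat.add_sub_cancel]
    nlinarith

/-- If `k` is a positive even integer, `G` has girth at least `k` and `D` is a
DFS tree of `G`, then `mac(G) ≥ w(G)/2 + ((k−1)/(2k))·w(D)`. -/
theorem maxcut_ge_of_girth_even {V : Type*} [Fintype V] (k : ℕ) (hk : 0 < k) (hke : Even k)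
    (G D : SimpleGraph V) (r : V) (w : Sym2 V → ℝ) (hw : ∀ e, 0 ≤ w e)
    (hG : G.Connected) (hgirth : (k : ℕ∞) ≤ G.egirth) (hD : IsDFSTree G D r) :
    ∃ A : Set V,
      totalWeight G w / 2 + ((k : ℝ) - 1) / (2 * k) * totalWeight D w ≤ cutWeight G w A := by
  classical
  obtain ⟨m, hm⟩ : ∃ m, k = m + 1 := ⟨k - 1, (Nat.succ_pred_eq_of_pos hk).symm⟩
  obtain ⟨hDle, hTree, hDFS⟩ := hD
  have hDconn : D.Connected := hTree.isConnected
  set B := Fintype.card V + k with hBdef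
  have hdep_lt : ∀ v, D.dist r v < Fintype.card V := by
    intro v
    obtain ⟨p, hp, hpl⟩ := hDconn.exists_path_of_dist r v
    rw [← hpl]; exact hp.length_lt
  set blk : ℕ → V → ℕ := fun t v => (D.dist r v + t) / k with hblkdef
  have hblk_lt : ∀ t, t < k → ∀ v, blk t v < B := by
    intro t ht v
    have h1 : blk t v ≤ D.dist r v + t := Nat.div_le_self _ _
    exact lt_of_le_of_lt h1 (Nat.add_lt_add (hdep_lt v) ht)
  set gext : (Fin B → Bool) → ℕ → Bool :=
    fun g i => if h : i < B then g ⟨i, h⟩ else false with hgextdef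
  set col : ℕ → (Fin B → Bool) → V → Bool :=
    fun t g v => xor (decide (Odd (D.dist r v))) (gext g (blk t v)) with hcoldef
  set ct : V → V → Fin k → ℕ := fun x y t =>
    (Finset.univ.filter (fun g : Fin B → Bool => col t.1 g x ≠ col t.1 g y)).card with hctdef
  set cutP : ℕ → (Fin B → Bool) → Sym2 V → Prop :=
    fun t g e => ∃ x y, e = s(x, y) ∧ col t g x = true ∧ col t g y = false with hcutPdef
  set cnt : Sym2 V → ℕ := fun e =>
    (Finset.univ.filter (fun p : Fin k × (Fin B → Bool) => cutP p.1.1 p.2 e)).card with hcntdef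
  -- unfolding col
  have hcol_eq : ∀ (t : ℕ) (g : Fin B → Bool) (v : V) (h : blk t v < B),
      col t g v = xor (decide (Odd (D.dist r v))) (g ⟨blk t v, h⟩) := by
    intro t g v h
    simp only [hcoldef, hgextdef, dif_pos h]
  -- half count
  have hct_half : ∀ x y (t : Fin k), blk t.1 x ≠ blk t.1 y → 2 * ct x y t = 2 ^ B := by
    intro x y t hne
    have hx := hblk_lt t.1 t.2 x
    have hy := hblk_lt t.1 t.2 y
    have hij : (⟨blk t.1 x, hx⟩ : Fin B) ≠ ⟨blk t.1 y, hy⟩ := by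
      intro h
      exact hne (by simpa using congrArg Fin.val h)
    have hpred : ∀ g : Fin B → Bool,
        (col t.1 g x ≠ col t.1 g y) ↔
          (xor (g ⟨blk t.1 x, hx⟩) (g ⟨blk t.1 y, hy⟩)
            = !(xor (decide (Odd (D.dist r x))) (decide (Odd (D.dist r y))))) := by
      intro g
      rw [hcol_eq t.1 g x hx, hcol_eq t.1 g y hy]
      exact bool_xor_ne₂ _ _ _ _
    have hfc : (Finset.univ.filter (fun g : Fin B → Bool => col t.1 g x ≠ col t.1 g y))
        = (Finset.univ.filter (fun g : Fin B → Bool =>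
            xor (g ⟨blk t.1 x, hx⟩) (g ⟨blk t.1 y, hy⟩)
              = !(xor (decide (Odd (D.dist r x))) (decide (Odd (D.dist r y)))))) :=
      Finset.filter_congr (fun g _ => hpred g)
    simp only [hctdef]
    rw [hfc]
    exact card_xor_eq _ _ hij _
  -- full count
  have hct_full : ∀ x y (t : Fin k), blk t.1 x = blk t.1 y →
      D.dist r x % 2 ≠ D.dist r y % 2 → ct x y t = 2 ^ B := by
    intro x y t heq hpar
    have hx := hblk_lt t.1 t.2 x
    have hy := hblk_lt t.1 t.2 y
    have hab : decide (Odd (D.dist r x)) ≠ decide (Odd (D.dist r y)) := by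
      rcases Nat.mod_two_eq_zero_or_one (D.dist r x) with h1 | h1 <;>
        rcases Nat.mod_two_eq_zero_or_one (D.dist r y) with h2 | h2
      · exact absurd (h1.trans h2.symm) hpar
      · simp [Nat.odd_iff, h1, h2]
      · simp [Nat.odd_iff, h1, h2]
      · exact absurd (h1.trans h2.symm) hpar
    have hpred : ∀ g : Fin B → Bool, (col t.1 g x ≠ col t.1 g y) := by
      intro g
      rw [hcol_eq t.1 g x hx, hcol_eq t.1 g y hy]
      have hfe : (⟨blk t.1 x, hx⟩ : Fin B) = ⟨blk t.1 y, hy⟩ := by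
        simp only [Fin.mk.injEq]; exact heq
      rw [hfe]
      exact bool_xor_ne₁ _ _ _ hab
    simp only [hctdef]
    rw [Finset.filter_true_of_mem (fun g _ => hpred g)]
    simp [Finset.card_univ, Fintype.card_fun]
  -- cut predicate
  have hcutP_iff : ∀ (t : ℕ) (g : Fin B → Bool) (a b : V),
      cutP t g s(a, b) ↔ col t g a ≠ col t g b := by
    intro t g a b
    simp only [hcutPdef]
    constructor
    · rintro ⟨x, y, hxy, hx, hy⟩
      rcases Sym2.eq_iff.mp hxy with ⟨rfl, rfl⟩ | ⟨rfl, rfl⟩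
      · rw [hx, hy]; simp
      · rw [hx, hy]; simp
    · intro h
      cases hca : col t g a <;> cases hcb : col t g b
      · exact absurd (hca.trans hcb.symm) h
      · exact ⟨b, a, Sym2.eq_swap, hcb, hca⟩
      · exact ⟨a, b, rfl, hca, hcb⟩
      · exact absurd (hca.trans hcb.symm) h
  -- cnt as sum over shifts
  have hcnt : ∀ x y : V, cnt s(x, y) = ∑ t : Fin k, ct x y t := by
    intro x y
    simp only [hcntdef]
    rw [Finset.filter_congr
      (fun (p : Fin k × (Fin B → Bool)) _ => hcutP_iff p.1.1 p.2 x y)]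
    rw [Finset.card_filter, Fintype.sum_prod_type]
    simp only [hctdef]
    refine Finset.sum_congr rfl fun t _ => ?_
    rw [Finset.card_filter]
  -- key bound for arbitrary (oriented) edges
  have keyB : ∀ x y, G.Adj x y → D.dist r x + D.dist x y = D.dist r y →
      (D.dist x y = 1 ∨ k - 1 ≤ D.dist x y) → k * 2 ^ B ≤ 2 * ∑ t : Fin k, ct x y t := by
    intro x y hadj hor hcase
    have hstep : ∀ t : Fin k, 2 ^ B ≤ 2 * ct x y t := by
      intro t
      by_cases hbe : blk t.1 x = blk t.1 y
      · have h2 : blk t.1 x = (D.dist r x + t.1) / k := by simp only [hblkdef]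
        have h3 : blk t.1 y = (D.dist r x + D.dist x y + t.1) / k := by
          simp only [hblkdef]; rw [← hor]
        have hdlt : D.dist x y < k := by
          by_contra hge
          push_neg at hge
          have h1 : (D.dist r x + t.1 + k) / k ≤ (D.dist r x + D.dist x y + t.1) / k :=
            Nat.div_le_div_right (aux_add3 hge)
          rw [Nat.add_div_right _ hk] at h1
          rw [h2, h3] at hbe
          rw [← hbe] at h1
          exact Nat.not_succ_le_self _ h1
        have hd1 : 0 < D.dist x y := hDconn.pos_dist_of_ne hadj.ne
        have hpar := aux_parity_ne hor (aux_odd_case hk hke hd1 hcase hdlt)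
        have hfull := hct_full x y t hbe hpar
        rw [hfull]
        exact Nat.le_mul_of_pos_left _ (by norm_num)
      · exact (hct_half x y t hbe).symm.le
    calc k * 2 ^ B = ∑ _t : Fin k, 2 ^ B := by
          rw [Finset.sum_const, Finset.card_univ, Fintype.card_fin, smul_eq_mul]
      _ ≤ ∑ t : Fin k, 2 * ct x y t := Finset.sum_le_sum fun t _ => hstep t
      _ = 2 * ∑ t : Fin k, ct x y t := by rw [Finset.mul_sum]
  -- key bound for tree edges
  have keyA : ∀ x y, D.dist r x + 1 = D.dist r y →
      (k + m) * 2 ^ B ≤ 2 * ∑ t : Fin k, ct x y t := by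
    intro x y hor
    set ts : Finset (Fin k) :=
      Finset.univ.filter (fun t : Fin k => k ∣ (D.dist r x + 1 + t.1)) with htsdef
    have hts_card : ts.card ≤ 1 := by
      rw [Finset.card_le_one]
      intro t ht t' ht'
      rw [htsdef, Finset.mem_filter] at ht ht'
      exact Fin.ext (aux_dvd_unique t.2 t'.2 ht.2 ht'.2)
    have hval1 : ∀ t : Fin k, t ∉ ts → ct x y t = 2 ^ B := by
      intro t hnot
      have hndvd : ¬ k ∣ (D.dist r x + 1 + t.1) := by
        intro hdvd
        exact hnot (by rw [htsdef, Finset.mem_filter]; exact ⟨Finset.mem_univ _, hdvd⟩)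
      have hbe : blk t.1 x = blk t.1 y := by
        simp only [hblkdef]
        rw [← hor, Nat.add_right_comm (D.dist r x) 1 t.1]
        rw [Nat.succ_div_of_not_dvd
          (by rw [← Nat.add_right_comm (D.dist r x) 1 t.1]; exact hndvd)]
      exact hct_full x y t hbe (by rw [← hor]; exact aux_succ_parity (D.dist r x))
    have hval2 : ∀ t ∈ ts, 2 * ct x y t = 2 ^ B := by
      intro t hmem
      rw [htsdef, Finset.mem_filter] at hmem
      have hdvd := hmem.2
      have hbe : blk t.1 x ≠ blk t.1 y := by
        simp only [hblkdef]
        rw [← hor, Nat.add_right_comm (D.dist r x) 1 t.1]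
        rw [Nat.succ_div_of_dvd
          (by rw [← Nat.add_right_comm (D.dist r x) 1 t.1]; exact hdvd)]
        exact fun h => Nat.succ_ne_self _ h.symm
      exact hct_half x y t hbe
    have h1 : ∑ t ∈ ts, (2 * ct x y t) = ts.card * 2 ^ B := by
      rw [Finset.sum_congr rfl (fun t ht => hval2 t ht), Finset.sum_const, smul_eq_mul]
    have h2 : ∑ t ∈ Finset.univ \ ts, (2 * ct x y t) = (k - ts.card) * (2 * 2 ^ B) := by
      have hcongr : ∀ t ∈ Finset.univ \ ts, 2 * ct x y t = 2 * 2 ^ B := by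
        intro t ht
        rw [Finset.mem_sdiff] at ht
        rw [hval1 t ht.2]
      rw [Finset.sum_congr rfl hcongr, Finset.sum_const, smul_eq_mul,
        Finset.card_sdiff_of_subset (Finset.subset_univ ts), Finset.card_univ, Fintype.card_fin]
    have htot : 2 * ∑ t : Fin k, ct x y t
        = (k - ts.card) * (2 * 2 ^ B) + ts.card * 2 ^ B := by
      rw [Finset.mul_sum, ← Finset.sum_sdiff (Finset.subset_univ ts), h1, h2]
    rw [htot]
    have hck : ts.card ≤ k := by
      have := Finset.card_le_card (Finset.subset_univ ts)
      simpa [Finset.card_univ] using this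
    exact aux_arith hk hm hts_card hck
  -- girth bound for non-tree edges
  have hgirth' : ∀ x y, G.Adj x y → ¬ D.Adj x y → k ≤ D.dist x y + 1 := by
    intro x y hadj hnd
    obtain ⟨p, hp, hpl⟩ := hDconn.exists_path_of_dist y x
    have hq : (p.mapLe hDle).IsPath := SimpleGraph.Walk.IsPath.mapLe hDle hp
    have hne : s(x, y) ∉ (p.mapLe hDle).edges := by
      intro hmem
      simp only [SimpleGraph.Walk.mapLe, SimpleGraph.Walk.edges_map] at hmem
      rw [List.mem_map] at hmem
      obtain ⟨e, he, hee⟩ := hmem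
      have he' : e = s(x, y) := by
        simpa [SimpleGraph.Hom.coe_ofLE, Sym2.map_id'] using hee
      subst he'
      exact hnd (p.adj_of_mem_edges he)
    have hcyc : (SimpleGraph.Walk.cons hadj (p.mapLe hDle)).IsCycle :=
      (SimpleGraph.Walk.cons_isCycle_iff _ hadj).mpr ⟨hq, hne⟩
    have hlen := SimpleGraph.le_egirth.mp hgirth x _ hcyc
    simp only [SimpleGraph.Walk.length_cons, SimpleGraph.Walk.mapLe,
      SimpleGraph.Walk.length_map] at hlen
    rw [hpl, SimpleGraph.dist_comm] at hlen
    exact_mod_cast hlen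
  have hcaseD : ∀ u v, G.Adj u v → (D.dist u v = 1 ∨ k - 1 ≤ D.dist u v) := by
    intro u v huv
    by_cases hD' : D.Adj u v
    · exact Or.inl (SimpleGraph.dist_eq_one_iff_adj.mpr hD')
    · exact Or.inr (Nat.sub_le_of_le_add (hgirth' u v huv hD'))
  -- claims about cnt
  have claimG : ∀ e ∈ G.edgeFinset, k * 2 ^ B ≤ 2 * cnt e := by
    intro e
    induction e using Sym2.ind with
    | _ a b =>
      intro he
      have hab : G.Adj a b := by
        rwa [SimpleGraph.mem_edgeFinset, SimpleGraph.mem_edgeSet] at he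
      rcases hDFS a b hab with h1 | h2
      · rw [hcnt a b]; exact keyB a b hab h1 (hcaseD a b hab)
      · rw [Sym2.eq_swap, hcnt b a]
        exact keyB b a hab.symm h2 (hcaseD b a hab.symm)
  have claimD : ∀ e ∈ D.edgeFinset, (k + m) * 2 ^ B ≤ 2 * cnt e := by
    intro e
    induction e using Sym2.ind with
    | _ a b =>
      intro he
      have hab : D.Adj a b := by
        rwa [SimpleGraph.mem_edgeFinset, SimpleGraph.mem_edgeSet] at he
      rcases hDFS a b (hDle hab) with h1 | h2
      · rw [SimpleGraph.dist_eq_one_iff_adj.mpr hab] at h1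
        rw [hcnt a b]
        exact keyA a b h1
      · rw [SimpleGraph.dist_eq_one_iff_adj.mpr hab.symm] at h2
        rw [Sym2.eq_swap, hcnt b a]
        exact keyA b a h2
  -- weights as finset sums
  have hWg : totalWeight G w = ∑ e ∈ G.edgeFinset, w e := by
    rw [show totalWeight G w = ∑ᶠ e ∈ G.edgeSet, w e from rfl,
      ← SimpleGraph.coe_edgeFinset, finsum_mem_coe_finset]
  have hWd : totalWeight D w = ∑ e ∈ D.edgeFinset, w e := by
    rw [show totalWeight D w = ∑ᶠ e ∈ D.edgeSet, w e from rfl,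
      ← SimpleGraph.coe_edgeFinset, finsum_mem_coe_finset]
  have hsub : D.edgeFinset ⊆ G.edgeFinset := SimpleGraph.edgeFinset_mono hDle
  -- cutWeight as finset sum
  have hcw : ∀ (t : ℕ) (g : Fin B → Bool),
      cutWeight G w {v | col t g v = true}
        = ∑ e ∈ G.edgeFinset.filter (cutP t g), w e := by
    intro t g
    have hset : {e ∈ G.edgeSet | ∃ x y, e = s(x, y) ∧ x ∈ {v | col t g v = true}
        ∧ y ∉ {v | col t g v = true}} = ↑(G.edgeFinset.filter (cutP t g)) := by
      ext e
      simp only [Set.mem_setOf_eq, Set.mem_sep_iff, Finset.coe_filter,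
        SimpleGraph.mem_edgeFinset, hcutPdef, Bool.not_eq_true]
    rw [show cutWeight G w {v | col t g v = true} = ∑ᶠ e ∈ {e ∈ G.edgeSet |
        ∃ x y, e = s(x, y) ∧ x ∈ {v | col t g v = true}
          ∧ y ∉ {v | col t g v = true}}, w e from rfl]
    rw [hset, finsum_mem_coe_finset]
  -- the averaged sum
  have hS : ∑ p : Fin k × (Fin B → Bool), (∑ e ∈ G.edgeFinset.filter (cutP p.1.1 p.2), w e)
      = ∑ e ∈ G.edgeFinset, (cnt e : ℝ) * w e := by
    have h1 : ∀ p : Fin k × (Fin B → Bool),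
        ∑ e ∈ G.edgeFinset.filter (cutP p.1.1 p.2), w e
          = ∑ e ∈ G.edgeFinset, if cutP p.1.1 p.2 e then w e else 0 :=
      fun p => Finset.sum_filter _ _
    rw [Finset.sum_congr rfl (fun p _ => h1 p), Finset.sum_comm]
    refine Finset.sum_congr rfl fun e _ => ?_
    rw [← Finset.sum_filter, Finset.sum_const, nsmul_eq_mul]
  have hNEΩ : (Finset.univ : Finset (Fin k × (Fin B → Bool))).Nonempty := by
    have : Nonempty (Fin k) := ⟨⟨0, hk⟩⟩
    exact Finset.univ_nonempty
  set R : ℝ := totalWeight G w / 2 + ((k : ℝ) - 1) / (2 * k) * totalWeight D w with hRdef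
  have hmain : ∑ _p : Fin k × (Fin B → Bool), R ≤
      ∑ p : Fin k × (Fin B → Bool), (∑ e ∈ G.edgeFinset.filter (cutP p.1.1 p.2), w e) := by
    rw [hS, Finset.sum_const, Finset.card_univ]
    simp only [Fintype.card_prod, Fintype.card_fun, Fintype.card_fin, Fintype.card_bool,
      nsmul_eq_mul]
    have hper : ∀ e ∈ G.edgeFinset,
        (k : ℝ) * 2 ^ B * w e + (if e ∈ D.edgeFinset then (m : ℝ) * 2 ^ B * w e else 0)
          ≤ 2 * ((cnt e : ℝ) * w e) := by
      intro e he
      by_cases hd : e ∈ D.edgeFinset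
      · rw [if_pos hd]
        have hc : ((k : ℝ) + m) * 2 ^ B ≤ 2 * (cnt e : ℝ) := by
          exact_mod_cast claimD e hd
        have hwe := hw e
        nlinarith
      · rw [if_neg hd, add_zero]
        have hc : (k : ℝ) * 2 ^ B ≤ 2 * (cnt e : ℝ) := by
          exact_mod_cast claimG e he
        have hwe := hw e
        nlinarith
    have hsum := Finset.sum_le_sum hper
    have hL : ∑ e ∈ G.edgeFinset,
        ((k : ℝ) * 2 ^ B * w e + (if e ∈ D.edgeFinset then (m : ℝ) * 2 ^ B * w e else 0))
        = (k : ℝ) * 2 ^ B * (∑ e ∈ G.edgeFinset, w e)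
          + (m : ℝ) * 2 ^ B * (∑ e ∈ D.edgeFinset, w e) := by
      rw [Finset.sum_add_distrib]
      congr 1
      · rw [Finset.mul_sum]
      · rw [Finset.sum_ite_mem, Finset.inter_eq_right.mpr hsub, Finset.mul_sum]
    have hR2 : ∑ e ∈ G.edgeFinset, 2 * ((cnt e : ℝ) * w e)
        = 2 * ∑ e ∈ G.edgeFinset, (cnt e : ℝ) * w e := by
      rw [Finset.mul_sum]
    rw [hL, hR2] at hsum
    have hkR : (k : ℝ) ≠ 0 := Nat.cast_ne_zero.mpr hk.ne'
    have hmR : (m : ℝ) = (k : ℝ) - 1 := by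
      have : (k : ℝ) = (m : ℝ) + 1 := by exact_mod_cast congrArg (Nat.cast : ℕ → ℝ) hm
      linarith
    have hid : 2 * (((k * 2 ^ B : ℕ) : ℝ) * R)
        = (k : ℝ) * 2 ^ B * (∑ e ∈ G.edgeFinset, w e)
          + (m : ℝ) * 2 ^ B * (∑ e ∈ D.edgeFinset, w e) := by
      rw [hRdef, hWg, hWd, hmR]
      push_cast
      field_simp
    push_cast at hid ⊢
    linarith
  obtain ⟨p, -, hp⟩ := Finset.exists_le_of_sum_le hNEΩ hmain
  exact ⟨{v | col p.1.1 p.2 v = true}, by rw [hcw p.1.1 p.2]; exact hp⟩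


end MaxCut
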